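/- Under the iterated vertical trivialization Ψ: Vert Vert GM ≅ (GM × 𝔤) × (𝔤 × 𝔤) of a principal G-bundle, the canonical involution Θ takes the form Θ(g, X, Y, Z) = (g, Y, X, Z + [X,Y]). -/

import Mathlib

open NormedSpace

/-- Under the iterated vertical trivialization
`Ψ : Vert Vert GM ≅ (GM × 𝔤) × (𝔤 × 𝔤)` of a principal `G`-bundle, with
`Ψ⁻¹(g,X,Y,Z) = d/dt|₀ d/dε|₀ g·e^{tX}·e^{ε(Y+tZ)}`, the canonical involution `Θ`
(swap of the parameters `t` and `ε`) takes the form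
`Θ(g,X,Y,Z) = (g, Y, X, Z + [X,Y])`.  In a matrix-group model (structure group inside
a complete normed algebra `A`, bracket the commutator `[X,Y] = XY − YX`), this says
the swapped family `(t,ε) ↦ g·e^{εX}·e^{t(Y+εZ)}` and the family
`(t,ε) ↦ g·e^{tY}·e^{ε(X + t(Z+[X,Y]))} = Ψ⁻¹(g, Y, X, Z+[X,Y])` define the same
element of the second iterated (vertical) tangent bundle: their second-order jet
data — value, `∂_t`, `∂_ε` and `∂²_{tε}` at `(0,0)` — coincide. -/
theorem stmt_17 {A : Type*} [NormedRing A] [NormedAlgebra ℝ A] [CompleteSpace A]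
    (g X Y Z : A) :
    letI γ₁ : ℝ → ℝ → A := fun t e => g * exp (e • X) * exp (t • Y + (t * e) • Z)
    letI γ₂ : ℝ → ℝ → A := fun t e =>
      g * exp (t • Y) * exp (e • X + (t * e) • (Z + (X * Y - Y * X)))
    (γ₁ 0 0 = γ₂ 0 0) ∧
    (deriv (fun t => γ₁ t 0) 0 = deriv (fun t => γ₂ t 0) 0) ∧
    (deriv (fun e => γ₁ 0 e) 0 = deriv (fun e => γ₂ 0 e) 0) ∧
    (deriv (fun t => deriv (fun e => γ₁ t e) 0) 0
      = deriv (fun t => deriv (fun e => γ₂ t e) 0) 0) := by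
  beta_reduce
  set W : A := Z + (X * Y - Y * X) with hW
  have hcd : ContDiff ℝ 2 (exp : A → A) := by
    have h : ∀ x : A, AnalyticAt ℝ (exp : A → A) x := fun x =>
      analyticAt_exp_of_mem_ball x ((expSeries_radius_eq_top ℝ A).symm ▸ edist_lt_top _ _)
    exact contDiff_iff_contDiffAt.2 fun x => (h x).contDiffAt.of_le le_top
  have hdiff : Differentiable ℝ (exp : A → A) := hcd.differentiable (by norm_num)
  have hcont : Continuous (fun u : A => fderiv ℝ (exp : A → A) u) :=
    hcd.continuous_fderiv (by norm_num)
  refine ⟨by simp, ?_, ?_, ?_⟩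
  · congr 1
    funext t
    simp
  · congr 1
    funext e
    simp
  · -- mixed partials
    set ψ : ℝ → A := fun t => g * (fderiv ℝ (exp : A → A) (t • Y) Z) with hψdef
    have inner1 : ∀ t : ℝ,
        deriv (fun e => g * exp (e • X) * exp (t • Y + (t * e) • Z)) 0
        = g * X * exp (t • Y) + t • ψ t := by
      intro t
      have h1 : HasDerivAt (fun e : ℝ => g * exp (e • X)) (g * X) 0 := by
        simpa using (hasDerivAt_exp_smul_const (𝕂 := ℝ) X 0).const_mul g
      have hline : HasDerivAt (fun e : ℝ => t • Y + e • (t • Z)) (t • Z) 0 := by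
        simpa using ((hasDerivAt_id (0 : ℝ)).smul_const (t • Z)).const_add (t • Y)
      have h2 : HasDerivAt (fun e : ℝ => exp (t • Y + e • (t • Z)))
          (fderiv ℝ (exp : A → A) (t • Y) (t • Z)) 0 := by
        have hE := (hdiff (t • Y + (0 : ℝ) • (t • Z))).hasFDerivAt
        simpa [Function.comp_def] using hE.comp_hasDerivAt (0 : ℝ) hline
      have h3 := h1.fun_mul h2
      have hfun : (fun e : ℝ => g * exp (e • X) * exp (t • Y + (t * e) • Z))
          = fun e : ℝ => (g * exp (e • X)) * exp (t • Y + e • (t • Z)) := by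
        funext e
        simp only [smul_smul, mul_comm e t]
      rw [hfun]
      rw [h3.deriv]
      simp [mul_smul_comm, (fderiv ℝ (exp : A → A) (t • Y)).map_smul, hψdef, mul_add]
    have inner2 : ∀ t : ℝ,
        deriv (fun e => g * exp (t • Y) * exp (e • X + (t * e) • (Z + (X * Y - Y * X)))) 0
        = g * exp (t • Y) * (X + t • W) := by
      intro t
      have h : HasDerivAt
          (fun e : ℝ => (g * exp (t • Y)) * exp (e • (X + t • W)))
          ((g * exp (t • Y)) * (X + t • W)) 0 := by
        simpa using (hasDerivAt_exp_smul_const (𝕂 := ℝ) (X + t • W) 0).const_mul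
          (g * exp (t • Y))
      have hfun : (fun e : ℝ => g * exp (t • Y) * exp (e • X + (t * e) • (Z + (X * Y - Y * X))))
          = fun e : ℝ => (g * exp (t • Y)) * exp (e • (X + t • W)) := by
        funext e
        simp only [← hW, smul_add, smul_smul, mul_comm e t]
      rw [hfun, h.deriv]
    have hψcont : Continuous ψ :=
      continuous_const.mul
        ((hcont.comp (continuous_id.smul continuous_const)).clm_apply continuous_const)
    have hψ0 : ψ 0 = g * Z := by
      simp [hψdef, (hasFDerivAt_exp_zero (𝕂 := ℝ) (𝔸 := A)).fderiv]
    have hB : HasDerivAt (fun t : ℝ => t • ψ t) (g * Z) 0 := by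
      rw [hasDerivAt_iff_tendsto_slope]
      have htend : Filter.Tendsto ψ (nhdsWithin (0 : ℝ) {(0 : ℝ)}ᶜ) (nhds (g * Z)) := by
        have := hψcont.tendsto 0
        rw [hψ0] at this
        exact this.mono_left nhdsWithin_le_nhds
      refine htend.congr' ?_
      filter_upwards [self_mem_nhdsWithin] with t ht
      have ht' : (t : ℝ) ≠ 0 := ht
      simp [slope_def_module, smul_smul, inv_mul_cancel₀ ht']
    have hA : HasDerivAt (fun t : ℝ => g * X * exp (t • Y)) (g * X * Y) 0 := by
      simpa [mul_assoc] using (hasDerivAt_exp_smul_const (𝕂 := ℝ) Y 0).const_mul (g * X)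
    have hL : deriv (fun t : ℝ =>
        deriv (fun e => g * exp (e • X) * exp (t • Y + (t * e) • Z)) 0) 0
        = g * X * Y + g * Z := by
      have heq : (fun t : ℝ =>
          deriv (fun e => g * exp (e • X) * exp (t • Y + (t * e) • Z)) 0)
          = fun t : ℝ => g * X * exp (t • Y) + t • ψ t := funext inner1
      rw [heq, (hA.fun_add hB).deriv]
    have hc : HasDerivAt (fun t : ℝ => g * exp (t • Y)) (g * Y) 0 := by
      simpa using (hasDerivAt_exp_smul_const (𝕂 := ℝ) Y 0).const_mul g
    have hd : HasDerivAt (fun t : ℝ => X + t • W) W 0 := by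
      simpa using ((hasDerivAt_id (0 : ℝ)).smul_const W).const_add X
    have hR : deriv (fun t : ℝ =>
        deriv (fun e => g * exp (t • Y) * exp (e • X + (t * e) • (Z + (X * Y - Y * X)))) 0) 0
        = g * Y * X + g * W := by
      have heq : (fun t : ℝ =>
          deriv (fun e => g * exp (t • Y) * exp (e • X + (t * e) • (Z + (X * Y - Y * X)))) 0)
          = fun t : ℝ => (g * exp (t • Y)) * (X + t • W) := funext inner2
      rw [heq, (hc.fun_mul hd).deriv]
      simp [mul_assoc]
    rw [hL, hR, hW]
    noncomm_ring
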